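/- arXiv:2103.11344 — 4 statements merged into one kernel-verified Lean document; each statement's English description precedes it below -/
import Mathlib

section
/- Let Y be a proper metric space and let G be a topological group acting continuously by isometries on Y, such that the action is proper (for every compact K ⊆ Y the set {g ∈ G : g·K ∩ K ≠ ∅} is compact) and the identity component G_0 of G is open in G (as holds when G is a Lie group). Then for every q ∈ Y there exists δ > 0 such that for all r ∈ (0, δ] the subgroup G(r,q) generated by {g ∈ G : d(q, g·q) ≤ r} equals G(δ,q); moreover, G(δ,q) is the subgroup of G generated by G_0 ∪ G_q, where G_q is the isotropy subgroup at q. -/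
open scoped Pointwise

set_option maxHeartbeats 1000000 in
/-- pointed gap lemma, Lemma 6.2. Let `G` be a topological group acting
continuously by isometries on a proper metric space `Y`, with proper action and open identity
component `G₀`. Then for every `q ∈ Y` there is `δ > 0` such that for all `r ∈ (0, δ]` the
subgroup `G(r,q)` generated by `{g : d(q, g·q) ≤ r}` equals `G(δ,q)`; moreover `G(δ,q)` is the
subgroup generated by `G₀ ∪ G_q`. -/
theorem pointed_gap_lemma
    {Y : Type*} [MetricSpace Y] [ProperSpace Y]
    {G : Type*} [Group G] [TopologicalSpace G] [IsTopologicalGroup G]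
    [MulAction G Y] [IsIsometricSMul G Y] [ContinuousSMul G Y]
    (hproper : ∀ K : Set Y, IsCompact K → IsCompact {g : G | (g • K ∩ K).Nonempty})
    (hopen : IsOpen (connectedComponent (1 : G)))
    (q : Y) :
    ∃ δ > 0,
      (∀ r : ℝ, 0 < r → r ≤ δ →
        Subgroup.closure {g : G | dist q (g • q) ≤ r}
          = Subgroup.closure {g : G | dist q (g • q) ≤ δ}) ∧
      Subgroup.closure {g : G | dist q (g • q) ≤ δ}
        = Subgroup.closure
            (connectedComponent (1 : G) ∪ (MulAction.stabilizer G q : Set G)) := by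
  classical
  set H : Subgroup G :=
    Subgroup.closure (connectedComponent (1 : G) ∪ (MulAction.stabilizer G q : Set G)) with hH
  have hcont : Continuous fun g : G => dist q (g • q) :=
    continuous_const.dist (continuous_id.smul continuous_const)
  have hopenH : IsOpen (H : Set G) := by
    apply Subgroup.isOpen_of_mem_nhds
    exact Filter.mem_of_superset (hopen.mem_nhds mem_connectedComponent)
      (Set.Subset.trans Set.subset_union_left Subgroup.subset_closure)
  have hclosedH : IsClosed (H : Set G) := H.isClosed_of_isOpen hopenH
  -- H ≤ closure {g | dist q (g•q) ≤ r} for any r > 0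
  have hsub : ∀ r : ℝ, 0 < r →
      H ≤ Subgroup.closure {g : G | dist q (g • q) ≤ r} := by
    intro r hr
    rw [hH]
    apply (Subgroup.closure_le _).2
    apply Set.union_subset
    · -- connected component
      have hopenC : IsOpen ((Subgroup.closure {g : G | dist q (g • q) ≤ r}) : Set G) := by
        apply Subgroup.isOpen_of_mem_nhds
        have hU : IsOpen {g : G | dist q (g • q) < r} := isOpen_lt hcont continuous_const
        have h1 : (1 : G) ∈ {g : G | dist q (g • q) < r} := by
          show dist q ((1 : G) • q) < r
          rw [one_smul, dist_self]; exact hr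
        have hsub' : {g : G | dist q (g • q) < r} ⊆
            ((Subgroup.closure {g : G | dist q (g • q) ≤ r}) : Set G) := fun g hg =>
          Subgroup.subset_closure (show dist q (g • q) ≤ r from le_of_lt hg)
        exact Filter.mem_of_superset (hU.mem_nhds h1) hsub'
      have hclo : IsClosed ((Subgroup.closure {g : G | dist q (g • q) ≤ r}) : Set G) :=
        Subgroup.isClosed_of_isOpen _ hopenC
      exact IsClopen.connectedComponent_subset ⟨hclo, hopenC⟩
        (Subgroup.one_mem _)
    · intro g hg
      apply Subgroup.subset_closure
      have hgq : g • q = q := hg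
      show dist q (g • q) ≤ r
      rw [hgq, dist_self]; exact hr.le
  -- existence of δ
  have hδ : ∃ δ : ℝ, 0 < δ ∧ δ ≤ 1 ∧ {g : G | dist q (g • q) ≤ δ} ⊆ (H : Set G) := by
    by_contra hcon
    push_neg at hcon
    set F : ℕ → Set G := fun n => {g : G | dist q (g • q) ≤ 1 / (n + 1)} ∩ (H : Set G)ᶜ with hF
    have hFne : ∀ n, (F n).Nonempty := by
      intro n
      have h1 : (0 : ℝ) < 1 / (n + 1) := by positivity
      have h2 : (1 : ℝ) / (n + 1) ≤ 1 := by
        rw [div_le_one (by positivity)]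
        linarith [Nat.cast_nonneg (α := ℝ) n]
      have h3 := hcon (1 / (n + 1)) h1 h2
      rw [Set.not_subset] at h3
      obtain ⟨g, hg1, hg2⟩ := h3
      exact ⟨g, hg1, hg2⟩
    have hFdec : ∀ n, F (n + 1) ⊆ F n := by
      intro n g hg
      have h1 : dist q (g • q) ≤ 1 / (((n + 1 : ℕ) : ℝ) + 1) := hg.1
      refine ⟨?_, hg.2⟩
      show dist q (g • q) ≤ 1 / (((n : ℕ) : ℝ) + 1)
      refine le_trans h1 ?_
      apply div_le_div_of_nonneg_left one_pos.le (by positivity)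
      push_cast; linarith
    have hFclosed : ∀ n, IsClosed (F n) :=
      fun n => (isClosed_le hcont continuous_const).inter hopenH.isClosed_compl
    have hFcompact : IsCompact (F 0) := by
      have hK : IsCompact {g : G | (g • Metric.closedBall q 1 ∩ Metric.closedBall q 1).Nonempty} :=
        hproper _ (isCompact_closedBall q 1)
      apply hK.of_isClosed_subset (hFclosed 0)
      intro g hg
      refine ⟨g • q, ⟨q, ?_, rfl⟩, ?_⟩
      · simp [Metric.mem_closedBall]
      · rw [Metric.mem_closedBall, dist_comm]
        refine le_trans hg.1 ?_
        norm_num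
    obtain ⟨g, hg⟩ := IsCompact.nonempty_iInter_of_sequence_nonempty_isCompact_isClosed
      F hFdec hFne hFcompact hFclosed
    have hgH : g ∉ (H : Set G) := (Set.mem_iInter.1 hg 0).2
    have hstab : g ∈ MulAction.stabilizer G q := by
      have hdist : dist q (g • q) = 0 := by
        have hle : ∀ n : ℕ, dist q (g • q) ≤ 1 / ((n : ℝ) + 1) :=
          fun n => (Set.mem_iInter.1 hg n).1
        by_contra hne
        have hp : 0 < dist q (g • q) := lt_of_le_of_ne dist_nonneg (Ne.symm hne)
        obtain ⟨n, hn⟩ := exists_nat_one_div_lt hp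
        exact absurd (hle n) (not_le.2 hn)
      have := dist_eq_zero.1 hdist
      exact this.symm
    exact hgH (Subgroup.subset_closure (Set.mem_union_right _ hstab))
  obtain ⟨δ, hδpos, _, hδsub⟩ := hδ
  have hHδ : Subgroup.closure {g : G | dist q (g • q) ≤ δ} = H := by
    apply le_antisymm
    · exact (Subgroup.closure_le _).2 hδsub
    · exact hsub δ hδpos
  refine ⟨δ, hδpos, ?_, hHδ⟩
  intro r hr hrδ
  rw [hHδ]
  apply le_antisymm
  · refine le_trans ((Subgroup.closure_le _).2 ?_) (le_of_eq hHδ)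
    exact fun g hg => Subgroup.subset_closure (le_trans hg hrδ)
  · exact hsub r hr
end

section
/- Let Y be a proper metric space and let G be a topological group acting continuously by isometries on Y, such that the action is proper (for every compact K ⊆ Y the set {g ∈ G : g·K ∩ K ≠ ∅} is compact), the identity component G_0 of G is open in G, and the action is cocompact: there exist p ∈ Y and D > 0 such that for every y ∈ Y there is g ∈ G with d(y, g·p) ≤ D. For r > 0 let G^r be the subgroup of G generated by {g ∈ G : d(q, g·q) ≤ r for some q ∈ Y}. Then there exists δ > 0 such that G^r = G^δ for all r ∈ (0, δ]; moreover, G^δ equals the subgroup H of G generated by G_0 together with all isotropy subgroups G_q, q ∈ Y. -/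
open scoped Pointwise

/-- The subgroup generated by the identity component together with all stabilizers. -/
private lemma gap_lemma_aux_normal
    {Y : Type*} [MetricSpace Y]
    {G : Type*} [Group G] [TopologicalSpace G] [IsTopologicalGroup G]
    [MulAction G Y] :
    (Subgroup.closure
      (connectedComponent (1 : G) ∪ ⋃ q : Y, (MulAction.stabilizer G q : Set G))).Normal := by
  set S : Set G := connectedComponent (1 : G) ∪ ⋃ q : Y, (MulAction.stabilizer G q : Set G)
  constructor
  intro n hn h
  have hmap : (Subgroup.closure S).map (MulAut.conj h).toMonoidHom ≤ Subgroup.closure S := by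
    rw [MonoidHom.map_closure]
    apply Subgroup.closure_mono
    rintro x ⟨y, hy, rfl⟩
    rcases hy with hy | hy
    · left
      have hcont : Continuous fun g : G => h * g * h⁻¹ := by continuity
      have := hcont.image_connectedComponent_subset (1 : G)
      simp only [mul_one, mul_inv_cancel] at this
      exact this ⟨y, hy, rfl⟩
    · right
      rcases Set.mem_iUnion.1 hy with ⟨q, hq⟩
      refine Set.mem_iUnion.2 ⟨h • q, ?_⟩
      have hq' : y • q = q := hq
      show (MulAut.conj h) y ∈ MulAction.stabilizer G (h • q)
      simp only [MulAut.conj_apply, MulAction.mem_stabilizer_iff, mul_smul, inv_smul_smul, hq']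
  exact hmap ⟨n, hn, rfl⟩

/-- The identity component lies in the subgroup generated by elements moving some point by ≤ r. -/
private lemma gap_lemma_aux_component
    {Y : Type*} [MetricSpace Y]
    {G : Type*} [Group G] [TopologicalSpace G] [IsTopologicalGroup G]
    [MulAction G Y] [ContinuousSMul G Y]
    (p : Y) {r : ℝ} (hr : 0 < r) :
    connectedComponent (1 : G) ⊆
      (Subgroup.closure {g : G | ∃ q : Y, dist q (g • q) ≤ r} : Set G) := by
  set U : Set G := {g : G | dist p (g • p) < r} with hU
  have hUopen : IsOpen U := by
    have : Continuous fun g : G => dist p (g • p) :=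
      (continuous_const.dist ((continuous_id.smul continuous_const)))
    exact isOpen_lt this continuous_const
  have h1U : (1 : G) ∈ U := by simp [hU, hr]
  set N : Subgroup G := Subgroup.closure U with hN
  have hUN : U ⊆ (N : Set G) := Subgroup.subset_closure
  have hNopen : IsOpen (N : Set G) :=
    Subgroup.isOpen_of_mem_nhds N (Filter.mem_of_superset (hUopen.mem_nhds h1U) hUN)
  have hNclosed : IsClosed (N : Set G) := N.isClosed_of_isOpen hNopen
  have hcc : connectedComponent (1 : G) ⊆ (N : Set G) :=
    IsClopen.connectedComponent_subset ⟨hNclosed, hNopen⟩ (hUN h1U)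
  refine hcc.trans ?_
  have : N ≤ Subgroup.closure {g : G | ∃ q : Y, dist q (g • q) ≤ r} := by
    rw [hN]
    apply Subgroup.closure_le _ |>.2
    intro g hg
    exact Subgroup.subset_closure ⟨p, le_of_lt hg⟩
  exact this

/-- gap lemma, Lemma 6.1. Let `G` be a topological group acting continuously
by isometries on a proper metric space `Y`, with proper action, open identity component `G₀`,
and cocompact action. For `r > 0` let `G^r` be the subgroup generated by
`{g : d(q, g·q) ≤ r for some q}`. Then there is `δ > 0` with `G^r = G^δ` for all `r ∈ (0, δ]`;
moreover `G^δ` is the subgroup generated by `G₀` together with all isotropy subgroups. -/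
theorem gap_lemma
    {Y : Type*} [MetricSpace Y] [ProperSpace Y]
    {G : Type*} [Group G] [TopologicalSpace G] [IsTopologicalGroup G]
    [MulAction G Y] [IsIsometricSMul G Y] [ContinuousSMul G Y]
    (hproper : ∀ K : Set Y, IsCompact K → IsCompact {g : G | (g • K ∩ K).Nonempty})
    (hopen : IsOpen (connectedComponent (1 : G)))
    (hcocompact : ∃ p : Y, ∃ D > (0 : ℝ), ∀ y : Y, ∃ g : G, dist y (g • p) ≤ D) :
    ∃ δ > 0,
      (∀ r : ℝ, 0 < r → r ≤ δ →
        Subgroup.closure {g : G | ∃ q : Y, dist q (g • q) ≤ r}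
          = Subgroup.closure {g : G | ∃ q : Y, dist q (g • q) ≤ δ}) ∧
      Subgroup.closure {g : G | ∃ q : Y, dist q (g • q) ≤ δ}
        = Subgroup.closure
            (connectedComponent (1 : G) ∪ ⋃ q : Y, (MulAction.stabilizer G q : Set G)) := by
  obtain ⟨p, D, hD, hcc⟩ := hcocompact
  set S : Set G := connectedComponent (1 : G) ∪ ⋃ q : Y, (MulAction.stabilizer G q : Set G)
    with hS
  set H : Subgroup G := Subgroup.closure S with hH
  have hHnormal : H.Normal := gap_lemma_aux_normal
  -- H is open, since it contains the open identity component
  have hHopen : IsOpen (H : Set G) := by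
    refine Subgroup.isOpen_of_mem_nhds H
      (Filter.mem_of_superset (hopen.mem_nhds mem_connectedComponent) ?_)
    exact fun g hg => Subgroup.subset_closure (Or.inl hg)
  -- stabilizers lie in H
  have hstabH : ∀ (g : G) (q : Y), g • q = q → g ∈ H := by
    intro g q hq
    exact Subgroup.subset_closure (Or.inr (Set.mem_iUnion.2 ⟨q, hq⟩))
  set K : Set Y := Metric.closedBall p D with hK
  have hKcpt : IsCompact K := isCompact_closedBall p D
  -- Key claim via compactness: small motions of points in K give elements of H
  have key : ∃ δ > (0 : ℝ), ∀ g : G, ∀ q ∈ K, dist q (g • q) ≤ δ → g ∈ H := by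
    by_contra hcon
    push_neg at hcon
    set t : ℕ → Set (G × Y) := fun n =>
      {x | x.1 ∉ H ∧ x.2 ∈ K ∧ dist x.2 (x.1 • x.2) ≤ 1 / (n + 1)} with ht
    have htne : ∀ n : ℕ, (t n).Nonempty := by
      intro n
      have hpos : (0 : ℝ) < 1 / (n + 1) := by positivity
      obtain ⟨g, q, hqK, hd, hgH⟩ := hcon (1 / (n + 1)) hpos
      exact ⟨(g, q), hgH, hqK, hd⟩
    have htmono : ∀ n : ℕ, t (n + 1) ⊆ t n := by
      intro n x ⟨h1, h2, h3⟩
      refine ⟨h1, h2, h3.trans ?_⟩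
      apply one_div_le_one_div_of_le (by positivity)
      push_cast; linarith
    have hdistcont : Continuous fun x : G × Y => dist x.2 (x.1 • x.2) :=
      continuous_snd.dist (continuous_fst.smul continuous_snd)
    have htclosed : ∀ n : ℕ, IsClosed (t n) := by
      intro n
      refine IsClosed.inter (hHopen.isClosed_compl.preimage continuous_fst) ?_
      exact IsClosed.inter (hKcpt.isClosed.preimage continuous_snd)
        (isClosed_le hdistcont continuous_const)
    set K' : Set Y := Metric.closedBall p (D + 1) with hK'
    have hK'cpt : IsCompact K' := isCompact_closedBall p (D + 1)
    have hTcpt : IsCompact {g : G | (g • K' ∩ K').Nonempty} := hproper K' hK'cpt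
    have ht0cpt : IsCompact (t 0) := by
      refine IsCompact.of_isClosed_subset (hTcpt.prod hKcpt) (htclosed 0) ?_
      rintro ⟨g, q⟩ ⟨h1, h2, h3⟩
      refine ⟨⟨g • q, ⟨q, ?_, rfl⟩, ?_⟩, h2⟩
      · exact Metric.closedBall_subset_closedBall (by linarith) h2
      · have hqp : dist q p ≤ D := h2
        have : dist (g • q) p ≤ dist (g • q) q + dist q p := dist_triangle _ _ _
        have h3' : dist q (g • q) ≤ 1 := by simpa using h3
        rw [hK', Metric.mem_closedBall]
        rw [dist_comm] at h3'
        linarith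
    obtain ⟨⟨g, q⟩, hgq⟩ :=
      IsCompact.nonempty_iInter_of_sequence_nonempty_isCompact_isClosed t htmono htne
        ht0cpt htclosed
    simp only [Set.mem_iInter] at hgq
    have hgH : g ∉ H := (hgq 0).1
    have hdle : dist q (g • q) ≤ 0 := by
      refine ge_of_tendsto' tendsto_one_div_add_atTop_nhds_zero_nat fun n => (hgq n).2.2
    have : g • q = q := (dist_le_zero.1 hdle).symm
    exact hgH (hstabH g q this)
  obtain ⟨δ, hδ, hkey⟩ := key
  -- `G^δ ⊆ H`
  have hGδH : Subgroup.closure {g : G | ∃ q : Y, dist q (g • q) ≤ δ} ≤ H := by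
    apply (Subgroup.closure_le _).2
    rintro g ⟨q, hq⟩
    obtain ⟨h, hh⟩ := hcc q
    have hq'K : h⁻¹ • q ∈ K := by
      rw [hK, Metric.mem_closedBall]
      calc dist (h⁻¹ • q) p = dist (h⁻¹ • q) (h⁻¹ • (h • p)) := by rw [inv_smul_smul]
        _ = dist q (h • p) := dist_smul _ _ _
        _ ≤ D := hh
    have hmove : dist (h⁻¹ • q) ((h⁻¹ * g * h) • (h⁻¹ • q)) ≤ δ := by
      have : (h⁻¹ * g * h) • (h⁻¹ • q) = h⁻¹ • (g • q) := by
        rw [mul_smul, mul_smul, smul_inv_smul]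
      rw [this, dist_smul]
      exact hq
    have hconj : h⁻¹ * g * h ∈ H := hkey _ _ hq'K hmove
    have := hHnormal.conj_mem _ hconj h
    simpa [mul_assoc] using this
  -- `H ⊆ G^r` for every `r > 0`
  have hHGr : ∀ r : ℝ, 0 < r →
      H ≤ Subgroup.closure {g : G | ∃ q : Y, dist q (g • q) ≤ r} := by
    intro r hr
    rw [hH, hS]
    apply (Subgroup.closure_le _).2
    rintro g (hg | hg)
    · exact gap_lemma_aux_component p hr hg
    · rcases Set.mem_iUnion.1 hg with ⟨q, hq⟩
      have : g • q = q := hq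
      exact Subgroup.subset_closure ⟨q, by simp [this, le_of_lt hr]⟩
  have hmain : Subgroup.closure {g : G | ∃ q : Y, dist q (g • q) ≤ δ} = H :=
    le_antisymm hGδH (hHGr δ hδ)
  refine ⟨δ, hδ, ?_, hmain⟩
  intro r hr hrδ
  refine le_antisymm ?_ ?_
  · apply Subgroup.closure_mono
    rintro g ⟨q, hq⟩
    exact ⟨q, hq.trans hrδ⟩
  · rw [hmain]
    exact hHGr r hr
end

section
/- Let Y be a proper metric space and let G be a topological group acting continuously by isometries on Y, such that the action is proper (for every compact K ⊆ Y the set {g ∈ G : g·K ∩ K ≠ ∅} is compact) and the identity component G_0 of G is open in G. Then for every q ∈ Y there exists δ > 0 such that B_δ(q) ∩ (G·q) ⊆ G_0·q; that is, every point of the orbit G·q at distance less than δ from q lies in the G_0-orbit of q. -/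
open scoped Pointwise

/-- Let `G` be a topological group acting continuously by isometries on a
proper metric space `Y`, with proper action and open identity component `G₀`. Then for every
`q ∈ Y` there is `δ > 0` such that every point of the orbit `G·q` at distance less than `δ`
from `q` lies in the `G₀`-orbit of `q`. -/
theorem orbit_component_open
    {Y : Type*} [MetricSpace Y] [ProperSpace Y]
    {G : Type*} [Group G] [TopologicalSpace G] [IsTopologicalGroup G]
    [MulAction G Y] [IsIsometricSMul G Y] [ContinuousSMul G Y]
    (hproper : ∀ K : Set Y, IsCompact K → IsCompact {g : G | (g • K ∩ K).Nonempty})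
    (hopen : IsOpen (connectedComponent (1 : G)))
    (q : Y) :
    ∃ δ > (0 : ℝ), Metric.ball q δ ∩ MulAction.orbit G q ⊆
      (fun g : G => g • q) '' connectedComponent (1 : G) := by
  set G₀ : Set G := connectedComponent (1 : G) with hG₀
  set K : Set Y := Metric.closedBall q 1 with hK
  have hKc : IsCompact K := isCompact_closedBall q 1
  set S : Set G := {g : G | (g • K ∩ K).Nonempty} with hS
  have hSc : IsCompact S := hproper K hKc
  -- H = G₀ * Stab(q)
  set H : Set G := {g : G | ∃ g₀ ∈ G₀, ∃ s : G, s • q = q ∧ g = g₀ * s} with hH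
  have hHopen : IsOpen H := by
    have : H = ⋃ s ∈ {s : G | s • q = q}, (fun x => x * s) '' G₀ := by
      ext g
      simp only [hH, Set.mem_setOf_eq, Set.mem_iUnion, Set.mem_image]
      constructor
      · rintro ⟨g₀, hg₀, s, hs, rfl⟩
        exact ⟨s, hs, g₀, hg₀, rfl⟩
      · rintro ⟨s, hs, g₀, hg₀, rfl⟩
        exact ⟨g₀, hg₀, s, hs, rfl⟩
    rw [this]
    exact isOpen_biUnion fun s _ => (Homeomorph.mulRight s).isOpenMap _ hopen
  -- T: image of the compact set S \ H under g ↦ g • q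
  set T : Set Y := (fun g : G => g • q) '' (S \ H) with hT
  have hTc : IsCompact T := ((hSc.diff hHopen).image (continuous_id.smul continuous_const))
  have hqT : q ∉ T := by
    rintro ⟨g, ⟨-, hgH⟩, hgq⟩
    exact hgH ⟨1, mem_connectedComponent, g, hgq, (one_mul g).symm⟩
  obtain ⟨ε, hε, hball⟩ := Metric.isOpen_iff.mp hTc.isClosed.isOpen_compl q hqT
  refine ⟨min ε 1, lt_min hε one_pos, ?_⟩
  rintro p ⟨hp, g, rfl⟩
  by_cases hgH : g ∈ H
  · obtain ⟨g₀, hg₀, s, hs, rfl⟩ := hgH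
    exact ⟨g₀, hg₀, by simp [mul_smul, hs]⟩
  · exfalso
    have hd : dist (g • q) q < min ε 1 := Metric.mem_ball.mp hp
    have hgS : g ∈ S := by
      refine ⟨g • q, ⟨q, Metric.mem_closedBall_self zero_le_one, rfl⟩, ?_⟩
      exact Metric.mem_closedBall.mpr (le_of_lt (lt_of_lt_of_le hd (min_le_right _ _)))
    exact hball (Metric.mem_ball.mpr (lt_of_lt_of_le hd (min_le_left _ _)))
      ⟨g, ⟨hgS, hgH⟩, rfl⟩
end

section
/- Let k be a natural number and let H be a subgroup of the isometry group of Euclidean space ℝᵏ such that dist(w, h·w) ≤ 1/20 for every h ∈ H and every w ∈ ℝᵏ with ‖w‖ ≤ 1. Then H is the trivial subgroup: every h ∈ H is the identity map. -/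
/-- If `H` is a subgroup of the isometry group of Euclidean space `ℝᵏ` such that
every element displaces every point of the closed unit ball by at most `1/20`, then `H` is
trivial: every element of `H` is the identity map. -/
theorem euclidean_isometry_subgroup_small_displacement_trivial
    (k : ℕ) (H : Subgroup (EuclideanSpace ℝ (Fin k) ≃ᵢ EuclideanSpace ℝ (Fin k)))
    (hsmall : ∀ h ∈ H, ∀ w : EuclideanSpace ℝ (Fin k), ‖w‖ ≤ 1 → dist w (h w) ≤ 1 / 20) :
    ∀ h ∈ H, ∀ x : EuclideanSpace ℝ (Fin k), h x = x := by
  set E := EuclideanSpace ℝ (Fin k)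
  intro h hH
  -- the linear part `A` of `h` (Mazur–Ulam)
  set A : E ≃ₗᵢ[ℝ] E := h.toRealLinearIsometryEquiv with hAdef
  have hA : ∀ x : E, A x = h x - h 0 := fun x => h.toRealLinearIsometryEquiv_apply x
  -- displacement bound for all powers of `h`
  have hdisp : ∀ (n : ℕ) (w : E), ‖w‖ ≤ 1 → ‖(h ^ n) w - w‖ ≤ 1 / 20 := by
    intro n w hw
    have := hsmall (h ^ n) (pow_mem hH n) w hw
    rwa [dist_eq_norm, norm_sub_rev] at this
  have hc : ∀ n : ℕ, ‖(h ^ n) 0‖ ≤ 1 / 20 := by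
    intro n
    simpa using hdisp n 0 (by simp)
  -- powers of `h` have linear part `A ^ n`
  have hpow : ∀ (n : ℕ) (x : E), (h ^ n) x = (A ^ n) x + (h ^ n) 0 := by
    intro n
    induction n with
    | zero => intro x; simp
    | succ n ih =>
      intro x
      have h1 : (h ^ (n + 1)) x = h ((h ^ n) x) := by
        rw [pow_succ']; rfl
      have h2 : (h ^ (n + 1)) 0 = h ((h ^ n) 0) := by
        rw [pow_succ']; rfl
      have h3 : (A ^ (n + 1)) x = A ((A ^ n) x) := by
        rw [pow_succ']; rfl
      have e1 : h ((h ^ n) x) = A ((h ^ n) x) + h 0 := by rw [hA]; abel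
      have e2 : h ((h ^ n) 0) = A ((h ^ n) 0) + h 0 := by rw [hA]; abel
      rw [h1, h2, h3, e1, e2, ih x, map_add]
      abel
  -- small displacement of `A ^ n` on the unit ball
  have hAn : ∀ (n : ℕ) (w : E), ‖w‖ ≤ 1 → ‖(A ^ n) w - w‖ ≤ 1 / 10 := by
    intro n w hw
    have h1 := hdisp n w hw
    have h2 := hc n
    have e : (A ^ n) w - w = ((h ^ n) w - w) - (h ^ n) 0 := by
      rw [hpow n w]; abel
    calc ‖(A ^ n) w - w‖ = ‖((h ^ n) w - w) - (h ^ n) 0‖ := by rw [e]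
      _ ≤ ‖(h ^ n) w - w‖ + ‖(h ^ n) 0‖ := norm_sub_le _ _
      _ ≤ 1 / 20 + 1 / 20 := add_le_add h1 h2
      _ = 1 / 10 := by norm_num
  -- homogeneous version
  have hAn' : ∀ (n : ℕ) (v : E), ‖(A ^ n) v - v‖ ≤ (1 / 10) * ‖v‖ := by
    intro n v
    rcases eq_or_ne v 0 with rfl | hv
    · simp
    · have hnv : (0 : ℝ) < ‖v‖ := norm_pos_iff.mpr hv
      have hw : ‖(‖v‖⁻¹ : ℝ) • v‖ ≤ 1 := by
        rw [norm_smul, norm_inv, norm_norm, inv_mul_cancel₀ hnv.ne']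
      have := hAn n (‖v‖⁻¹ • v) hw
      have e : (A ^ n) ((‖v‖⁻¹ : ℝ) • v) - (‖v‖⁻¹ : ℝ) • v
          = (‖v‖⁻¹ : ℝ) • ((A ^ n) v - v) := by
        rw [map_smul, smul_sub]
      rw [e, norm_smul, norm_inv, norm_norm] at this
      calc ‖(A ^ n) v - v‖ = ‖v‖ * (‖v‖⁻¹ * ‖(A ^ n) v - v‖) := by
            field_simp
        _ ≤ ‖v‖ * (1 / 10) := by
            exact mul_le_mul_of_nonneg_left this hnv.le
        _ = (1 / 10) * ‖v‖ := by ring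
  -- doubling inequality
  have hdouble : ∀ (n : ℕ) (v : E),
      (19 / 10) * ‖(A ^ n) v - v‖ ≤ ‖(A ^ (2 * n)) v - v‖ := by
    intro n v
    set u : E := (A ^ n) v - v with hu
    have e : (A ^ (2 * n)) v - v = 2 • u + ((A ^ n) u - u) := by
      have : (A ^ (2 * n)) v = (A ^ n) ((A ^ n) v) := by
        rw [two_mul, pow_add]; rfl
      rw [this, hu]
      have : (A ^ n) ((A ^ n) v) = (A ^ n) (v + ((A ^ n) v - v)) := by
        congr 1; abel
      rw [this, map_add]
      abel
    have h2 : ‖(A ^ n) u - u‖ ≤ (1 / 10) * ‖u‖ := hAn' n u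
    have : ‖2 • u‖ ≤ ‖2 • u + ((A ^ n) u - u)‖ + ‖(A ^ n) u - u‖ := by
      calc ‖2 • u‖ = ‖(2 • u + ((A ^ n) u - u)) - ((A ^ n) u - u)‖ := by congr 1; abel
        _ ≤ ‖2 • u + ((A ^ n) u - u)‖ + ‖(A ^ n) u - u‖ := norm_sub_le _ _
    rw [e]
    have hn2 : ‖(2 : ℕ) • u‖ = 2 * ‖u‖ := by
      rw [two_smul]
      have : u + u = (2 : ℝ) • u := by rw [two_smul]
      rw [this, norm_smul]; simp
    nlinarith [norm_nonneg u]
  -- iterate doubling: growth along powers `2 ^ m`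
  have hiter : ∀ (v : E) (m : ℕ),
      (19 / 10 : ℝ) ^ m * ‖A v - v‖ ≤ ‖(A ^ (2 ^ m)) v - v‖ := by
    intro v m
    induction m with
    | zero => simp [pow_one]
    | succ m ih =>
      have := hdouble (2 ^ m) v
      have e : 2 * 2 ^ m = 2 ^ (m + 1) := by ring
      rw [e] at this
      calc (19 / 10 : ℝ) ^ (m + 1) * ‖A v - v‖
          = (19 / 10) * ((19 / 10 : ℝ) ^ m * ‖A v - v‖) := by ring
        _ ≤ (19 / 10) * ‖(A ^ (2 ^ m)) v - v‖ := by
            apply mul_le_mul_of_nonneg_left ih; norm_num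
        _ ≤ ‖(A ^ (2 ^ (m + 1))) v - v‖ := this
  -- hence `A` is the identity
  have hAid : ∀ v : E, A v = v := by
    intro v
    by_contra hne
    have hd : (0 : ℝ) < ‖A v - v‖ := by
      rw [norm_pos_iff, sub_ne_zero]; exact hne
    obtain ⟨m, hm⟩ := pow_unbounded_of_one_lt (((1 / 10) * ‖v‖) / ‖A v - v‖)
      (by norm_num : (1 : ℝ) < 19 / 10)
    have h1 := hiter v m
    have h2 := hAn' (2 ^ m) v
    have : (1 / 10) * ‖v‖ < (19 / 10 : ℝ) ^ m * ‖A v - v‖ := by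
      rw [div_lt_iff₀ hd] at hm
      linarith
    linarith
  -- so `h` is a translation by `b := h 0`
  have htrans : ∀ x : E, h x = x + h 0 := by
    intro x
    have := hA x
    rw [hAid x] at this
    linear_combination (norm := abel) -this
  -- and the translation vector must vanish
  have hb : h 0 = 0 := by
    by_contra hb0
    have hnb : (0 : ℝ) < ‖h 0‖ := norm_pos_iff.mpr hb0
    have hpt : ∀ n : ℕ, (h ^ n) 0 = n • h 0 := by
      intro n
      induction n with
      | zero => simp
      | succ n ih =>
        have h1 : (h ^ (n + 1)) 0 = h ((h ^ n) 0) := by rw [pow_succ']; rfl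
        rw [h1, ih, htrans, succ_nsmul]
    obtain ⟨n, hn⟩ := pow_unbounded_of_one_lt ((1 / 20 : ℝ) / ‖h 0‖)
      (by norm_num : (1 : ℝ) < 2)
    have h1 := hc (2 ^ n)
    rw [hpt, ← Nat.cast_smul_eq_nsmul ℝ, norm_smul] at h1
    simp only [Real.norm_natCast] at h1
    have h2n : (n : ℝ) + 1 ≤ (2 : ℝ) ^ n := by
      exact_mod_cast Nat.succ_le_of_lt (Nat.lt_two_pow_self (n := n))
    have : (1 / 20 : ℝ) / ‖h 0‖ < (2 ^ n : ℕ) := by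
      calc (1 / 20 : ℝ) / ‖h 0‖ < 2 ^ n := hn
        _ = ((2 ^ n : ℕ) : ℝ) := by push_cast; ring
    rw [div_lt_iff₀ hnb] at this
    linarith
  intro x
  rw [htrans x, hb, add_zero]
end
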